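/- Let Φ assign to each unordered pair {i,k} of distinct indices i,k ∈ {1,2,3,4} a quaternion Φᵢₖ = Φₖᵢ, and suppose the six quaternions Φ₁₂, Φ₁₃, Φ₁₄, Φ₂₃, Φ₂₄, Φ₃₄ are pairwise distinct. Then for every permutation π of {1,2,3,4}, the multi-ratio condition M(Φ_{π(1)π(4)}, Φ_{π(1)π(2)}, Φ_{π(2)π(4)}, Φ_{π(2)π(3)}, Φ_{π(3)π(4)}, Φ_{π(1)π(3)}) = −1 holds if and only if M(Φ₁₄, Φ₁₂, Φ₂₄, Φ₂₃, Φ₃₄, Φ₁₃) = −1 holds. In other words, the multi-ratio condition on the six points of an octahedral configuration is invariant under all permutations of the indices 1,2,3,4. -/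

import Mathlib

noncomputable section MultiRatioAux


private lemma mul_left_eq_iff' {x : Quaternion ℝ} (hx : x ≠ 0) (y z : Quaternion ℝ) : x * y = z ↔ y = x⁻¹ * z :=
  ⟨fun h => by rw [← h, inv_mul_cancel_left₀ hx], fun h => by rw [h, mul_inv_cancel_left₀ hx]⟩

private lemma inv_mul_left_eq_iff' {x : Quaternion ℝ} (hx : x ≠ 0) (y z : Quaternion ℝ) : x⁻¹ * y = z ↔ y = x * z :=
  ⟨fun h => by rw [← h, mul_inv_cancel_left₀ hx], fun h => by rw [h, inv_mul_cancel_left₀ hx]⟩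

private lemma solve_f {d f b L : Quaternion ℝ} (hdf : d ≠ f) (hdb : d ≠ b) :
    (d - f)⁻¹ * (f - b) = L ↔ f = d - (d - b) * (1 + L)⁻¹ := by
  have hdf0 : d - f ≠ 0 := sub_ne_zero.mpr hdf
  have hdb0 : d - b ≠ 0 := sub_ne_zero.mpr hdb
  constructor
  · intro h
    have h1 : f - b = (d - f) * L := by rw [← h, mul_inv_cancel_left₀ hdf0]
    have h2 : d - b = (d - f) * (1 + L) := by rw [mul_add, mul_one, ← h1]; abel
    have h3 : (1 : Quaternion ℝ) + L ≠ 0 := by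
      intro h0; rw [h0, mul_zero] at h2; exact hdb0 h2
    have h4 : (d - b) * (1 + L)⁻¹ = d - f := by rw [h2, mul_inv_cancel_right₀ h3]
    rw [h4]; abel
  · intro h
    have h3 : (1 : Quaternion ℝ) + L ≠ 0 := by
      intro h0
      rw [h0, inv_zero, mul_zero, sub_zero] at h
      exact hdf h.symm
    have h4 : d - f = (d - b) * (1 + L)⁻¹ := by rw [h]; abel
    have h5 : (1 : Quaternion ℝ) - (1 + L)⁻¹ = (1 + L)⁻¹ * L := by
      have hh : (1 + L)⁻¹ * (1 + L) = 1 := inv_mul_cancel₀ h3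
      calc (1 : Quaternion ℝ) - (1 + L)⁻¹ = (1 + L)⁻¹ * (1 + L) - (1 + L)⁻¹ := by rw [hh]
        _ = (1 + L)⁻¹ * L := by rw [mul_add, mul_one]; abel
    have h1 : f - b = (d - f) * L := by
      have hfb : f - b = (d - b) - (d - f) := by abel
      rw [hfb, h4]
      calc (d - b) - (d - b) * (1 + L)⁻¹ = (d - b) * ((1 : Quaternion ℝ) - (1 + L)⁻¹) := by
            rw [mul_sub, mul_one]
        _ = (d - b) * (1 + L)⁻¹ * L := by rw [h5, mul_assoc]
    rw [h1, inv_mul_cancel_left₀ hdf0]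

private lemma cond_f {a b c d e f : Quaternion ℝ} (hca : c ≠ a) (hae : a ≠ e) (hed : e ≠ d) (hdf : d ≠ f)
    (hbc : b ≠ c) (hdb : d ≠ b) :
    (c - a) * (a - e)⁻¹ * (e - d) * (d - f)⁻¹ * (f - b) * (b - c)⁻¹ = -1 ↔
      f = d - (d - b) * (1 + (e - d)⁻¹ * ((a - e) * ((c - a)⁻¹ * (c - b))))⁻¹ := by
  have hbc0 : b - c ≠ 0 := sub_ne_zero.mpr hbc
  have hca0 : c - a ≠ 0 := sub_ne_zero.mpr hca
  have hae0 : a - e ≠ 0 := sub_ne_zero.mpr hae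
  have hed0 : e - d ≠ 0 := sub_ne_zero.mpr hed
  have h1 : (c - a) * (a - e)⁻¹ * (e - d) * (d - f)⁻¹ * (f - b) * (b - c)⁻¹
      = ((c - a) * ((a - e)⁻¹ * ((e - d) * ((d - f)⁻¹ * (f - b))))) * (b - c)⁻¹ := by
    simp [mul_assoc]
  rw [h1, mul_inv_eq_iff_eq_mul₀ hbc0, neg_one_mul, neg_sub,
    mul_left_eq_iff' hca0, inv_mul_left_eq_iff' hae0, mul_left_eq_iff' hed0,
    solve_f hdf hdb]

private lemma one_add_L {B C D E : Quaternion ℝ} (hC : C ≠ 0) (hED : E - D ≠ 0) :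
    1 + (E - D)⁻¹ * ((-E) * (C⁻¹ * (C - B))) = (E - D)⁻¹ * (E * (C⁻¹ * B) - D) := by
  have hX : (-E) * (C⁻¹ * (C - B)) = (E * (C⁻¹ * B) - D) - (E - D) := by
    rw [mul_sub, inv_mul_cancel₀ hC, mul_sub, mul_one]
    noncomm_ring
  rw [hX, mul_sub, inv_mul_cancel₀ hED]
  abel

private lemma Krel {B C D E : Quaternion ℝ} (hB : B ≠ 0) (hC : C ≠ 0) :
    D * (B⁻¹ * C) - E = -((E * (C⁻¹ * B) - D) * (B⁻¹ * C)) := by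
  have h1 : (C⁻¹ * B) * (B⁻¹ * C) = 1 := by
    rw [mul_assoc, ← mul_assoc B, mul_inv_cancel₀ hB, one_mul, inv_mul_cancel₀ hC]
  have h2 : (E * (C⁻¹ * B)) * (B⁻¹ * C) = E := by
    rw [mul_assoc, h1, mul_one]
  rw [sub_mul, h2]
  abel

private lemma core_identity {B C D E : Quaternion ℝ} (hB : B ≠ 0) (hC : C ≠ 0) (hED : E - D ≠ 0)
    (hK : E * (C⁻¹ * B) - D ≠ 0) :
    D - (D - B) * (1 + (E - D)⁻¹ * ((-E) * (C⁻¹ * (C - B))))⁻¹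
      = E - (E - C) * (1 + (D - E)⁻¹ * ((-D) * (B⁻¹ * (B - C))))⁻¹ := by
  have hDE : D - E ≠ 0 := fun h => hED (by rw [← neg_sub D E, h, neg_zero])
  set K := E * (C⁻¹ * B) - D with hKdef
  have e1 := one_add_L (B := B) (C := C) (D := D) (E := E) hC hED
  have e2 := one_add_L (B := C) (C := B) (D := E) (E := D) hB hDE
  have hKrel : D * (B⁻¹ * C) - E = -(K * (B⁻¹ * C)) := Krel hB hC
  rw [e1, e2, hKrel]
  have e3 : (E - C) * (C⁻¹ * B) = K + (D - B) := by
    rw [sub_mul, ← mul_assoc C C⁻¹ B, mul_inv_cancel₀ hC, one_mul, hKdef]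
    abel
  have key : E - (E - C) * ((-(K * (B⁻¹ * C)))⁻¹ * (D - E))
      = D - (D - B) * (K⁻¹ * (E - D)) := by
    rw [inv_neg, mul_inv_rev, mul_inv_rev, inv_inv]
    have hh : (E - C) * (-(C⁻¹ * B * K⁻¹) * (D - E))
        = -(((E - C) * (C⁻¹ * B)) * (K⁻¹ * (D - E))) := by
      noncomm_ring
    rw [hh, e3, add_mul, mul_inv_cancel_left₀ hK]
    have hflip : K⁻¹ * (D - E) = -(K⁻¹ * (E - D)) := by
      rw [← neg_sub E D, mul_neg]
    rw [hflip, mul_neg]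
    abel
  rw [mul_inv_rev, inv_inv, mul_inv_rev, inv_inv]
  exact key.symm

private lemma swap_neg_one {X Y : Quaternion ℝ} (hX : X ≠ 0) (h : X * Y = -1) : Y * X = -1 := by
  have h1 : X⁻¹ * (X * Y) = X⁻¹ * (-1) := by rw [h]
  rw [inv_mul_cancel_left₀ hX] at h1
  rw [h1, mul_neg_one, neg_mul, inv_mul_cancel₀ hX]

private lemma rev_eq (P₁ P₂ P₃ P₄ P₅ P₆ : Quaternion ℝ) :
    (P₁ - P₆) * (P₆ - P₅)⁻¹ * (P₅ - P₄) * (P₄ - P₃)⁻¹ * (P₃ - P₂) * (P₂ - P₁)⁻¹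
      = ((P₁ - P₂) * (P₂ - P₃)⁻¹ * (P₃ - P₄) * (P₄ - P₅)⁻¹ * (P₅ - P₆) * (P₆ - P₁)⁻¹)⁻¹ := by
  have hr : ((P₁ - P₂) * (P₂ - P₃)⁻¹ * (P₃ - P₄) * (P₄ - P₅)⁻¹ * (P₅ - P₆) * (P₆ - P₁)⁻¹)⁻¹
      = (P₆ - P₁) * ((P₅ - P₆)⁻¹ * ((P₄ - P₅) * ((P₃ - P₄)⁻¹ * ((P₂ - P₃) * (P₁ - P₂)⁻¹)))) := by
    simp only [mul_inv_rev, inv_inv, mul_assoc]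
  rw [hr, ← neg_sub P₆ P₁, ← neg_sub P₅ P₆, ← neg_sub P₄ P₅, ← neg_sub P₃ P₄, ← neg_sub P₂ P₃,
    ← neg_sub P₁ P₂]
  simp only [inv_neg, neg_mul, mul_neg, neg_neg, mul_assoc]

private lemma rev_iff (P₁ P₂ P₃ P₄ P₅ P₆ : Quaternion ℝ) :
    (P₁ - P₆) * (P₆ - P₅)⁻¹ * (P₅ - P₄) * (P₄ - P₃)⁻¹ * (P₃ - P₂) * (P₂ - P₁)⁻¹ = -1 ↔
      (P₁ - P₂) * (P₂ - P₃)⁻¹ * (P₃ - P₄) * (P₄ - P₅)⁻¹ * (P₅ - P₆) * (P₆ - P₁)⁻¹ = -1 := by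
  rw [rev_eq]
  constructor
  · intro h
    have h2 := congrArg (·⁻¹) h
    rw [inv_inv, inv_neg, inv_one] at h2
    exact h2
  · intro h
    rw [h, inv_neg, inv_one]

private lemma rot2_imp {P₁ P₂ P₃ P₄ P₅ P₆ : Quaternion ℝ} (h12 : P₁ ≠ P₂) (h23 : P₂ ≠ P₃)
    (h : (P₁ - P₂) * (P₂ - P₃)⁻¹ * (P₃ - P₄) * (P₄ - P₅)⁻¹ * (P₅ - P₆) * (P₆ - P₁)⁻¹ = -1) :
    (P₃ - P₄) * (P₄ - P₅)⁻¹ * (P₅ - P₆) * (P₆ - P₁)⁻¹ * (P₁ - P₂) * (P₂ - P₃)⁻¹ = -1 := by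
  have hX : (P₁ - P₂) * (P₂ - P₃)⁻¹ ≠ 0 :=
    mul_ne_zero (sub_ne_zero.mpr h12) (inv_ne_zero (sub_ne_zero.mpr h23))
  have h' : ((P₁ - P₂) * (P₂ - P₃)⁻¹) *
      ((P₃ - P₄) * (P₄ - P₅)⁻¹ * (P₅ - P₆) * (P₆ - P₁)⁻¹) = -1 := by
    rw [← h]; noncomm_ring
  have h2 := swap_neg_one hX h'
  rw [← h2]; noncomm_ring

set_option maxHeartbeats 1000000 in
/-- The hard case: the new hexagon obtained from the swap (2 3). -/
private lemma hard_iff {a b c d e f : Quaternion ℝ} (hca : c ≠ a) (hae : a ≠ e) (hed : e ≠ d)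
    (hdf : d ≠ f) (hbc : b ≠ c) (hdb : d ≠ b) (hba : b ≠ a) (had : a ≠ d)
    (hef : e ≠ f) (hec : e ≠ c) :
    (b - a) * (a - d)⁻¹ * (d - e) * (e - f)⁻¹ * (f - c) * (c - b)⁻¹ = -1 ↔
      (c - a) * (a - e)⁻¹ * (e - d) * (d - f)⁻¹ * (f - b) * (b - c)⁻¹ = -1 := by
  have hB : b - a ≠ 0 := sub_ne_zero.mpr hba
  have hC : c - a ≠ 0 := sub_ne_zero.mpr hca
  have hED : (e - a) - (d - a) ≠ 0 := by
    rw [sub_sub_sub_cancel_right]; exact sub_ne_zero.mpr hed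
  have hDE : (d - a) - (e - a) ≠ 0 := by
    rw [sub_sub_sub_cancel_right]; exact sub_ne_zero.mpr hed.symm
  rw [cond_f hba had hed.symm hef hbc.symm hec, cond_f hca hae hed hdf hbc hdb]
  by_cases hK : (e - a) * ((c - a)⁻¹ * (b - a)) - (d - a) = 0
  · -- degenerate case: both conditions are false
    have h1 : 1 + (e - d)⁻¹ * ((a - e) * ((c - a)⁻¹ * (c - b))) = 0 := by
      have hh := one_add_L (B := b - a) (C := c - a) (D := d - a) (E := e - a) hC hED
      simp only [sub_sub_sub_cancel_right, neg_sub] at hh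
      rw [hh, hK, mul_zero]
    have h2 : 1 + (d - e)⁻¹ * ((a - d) * ((b - a)⁻¹ * (b - c))) = 0 := by
      have hh := one_add_L (B := c - a) (C := b - a) (D := e - a) (E := d - a) hB hDE
      simp only [sub_sub_sub_cancel_right, neg_sub] at hh
      have hk := Krel (B := b - a) (C := c - a) (D := d - a) (E := e - a) hB hC
      rw [hh, hk, hK, zero_mul, neg_zero, mul_zero]
    rw [h1, h2]
    simp only [inv_zero, mul_zero, sub_zero]
    exact ⟨fun h => (hef h.symm).elim, fun h => (hdf h.symm).elim⟩
  · have idty := core_identity (B := b - a) (C := c - a) (D := d - a) (E := e - a)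
      hB hC hED hK
    simp only [sub_sub_sub_cancel_right, neg_sub] at idty
    have heq : d - (d - b) * (1 + (e - d)⁻¹ * ((a - e) * ((c - a)⁻¹ * (c - b))))⁻¹
        = e - (e - c) * (1 + (d - e)⁻¹ * ((a - d) * ((b - a)⁻¹ * (b - c))))⁻¹ := by
      calc d - (d - b) * (1 + (e - d)⁻¹ * ((a - e) * ((c - a)⁻¹ * (c - b))))⁻¹
          = ((d - a) - (d - b) * (1 + (e - d)⁻¹ * ((a - e) * ((c - a)⁻¹ * (c - b))))⁻¹) + a := by
            abel
        _ = ((e - a) - (e - c) * (1 + (d - e)⁻¹ * ((a - d) * ((b - a)⁻¹ * (b - c))))⁻¹) + a := by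
            rw [idty]
        _ = e - (e - c) * (1 + (d - e)⁻¹ * ((a - d) * ((b - a)⁻¹ * (b - c))))⁻¹ := by abel
    rw [heq]

end MultiRatioAux

/-- Right multi-ratio of six quaternions. -/
noncomputable def rightMultiRatio (P₁ P₂ P₃ P₄ P₅ P₆ : Quaternion ℝ) : Quaternion ℝ :=
  (P₁ - P₂) * (P₂ - P₃)⁻¹ * (P₃ - P₄) * (P₄ - P₅)⁻¹ * (P₅ - P₆) * (P₆ - P₁)⁻¹

namespace MultiRatioPerm

/-- Admissible data: symmetric with pairwise distinct values on distinct pairs. -/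
private def Adm (Φ : Fin 4 → Fin 4 → Quaternion ℝ) : Prop :=
  (∀ i k, Φ i k = Φ k i) ∧ ∀ i k l m : Fin 4, i ≠ k → l ≠ m →
    ({i, k} : Finset (Fin 4)) ≠ ({l, m} : Finset (Fin 4)) → Φ i k ≠ Φ l m

private def Cnd (Φ : Fin 4 → Fin 4 → Quaternion ℝ) (π : Equiv.Perm (Fin 4)) : Prop :=
  rightMultiRatio (Φ (π 0) (π 3)) (Φ (π 0) (π 1)) (Φ (π 1) (π 3)) (Φ (π 1) (π 2))
    (Φ (π 2) (π 3)) (Φ (π 0) (π 2)) = -1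

private def Good (π : Equiv.Perm (Fin 4)) : Prop :=
  ∀ Φ, Adm Φ → (Cnd Φ π ↔ Cnd Φ 1)

private lemma Adm.comp {Φ} (h : Adm Φ) (σ : Equiv.Perm (Fin 4)) :
    Adm (fun u v => Φ (σ u) (σ v)) := by
  refine ⟨fun i k => h.1 _ _, fun i k l m hik hlm hne => ?_⟩
  refine h.2 _ _ _ _ (fun hh => hik (σ.injective hh)) (fun hh => hlm (σ.injective hh)) ?_
  intro hcontra
  apply hne
  have himg : Finset.image σ ({i, k} : Finset (Fin 4)) = Finset.image σ ({l, m} : Finset (Fin 4)) := by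
    simpa [Finset.image_insert, Finset.image_singleton] using hcontra
  exact Finset.image_injective σ.injective himg

private lemma Good.one : Good 1 := fun _ _ => Iff.rfl

private lemma Good.mul {π τ : Equiv.Perm (Fin 4)} (hπ : Good π) (hτ : Good τ) :
    Good (π * τ) := by
  intro Φ hΦ
  have h1 : Cnd Φ (π * τ) ↔ Cnd (fun u v => Φ (π u) (π v)) τ := Iff.rfl
  have h2 : Cnd (fun u v => Φ (π u) (π v)) 1 ↔ Cnd Φ π := Iff.rfl
  exact h1.trans ((hτ _ (hΦ.comp π)).trans (h2.trans (hπ Φ hΦ)))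

end MultiRatioPerm

namespace MultiRatioPerm

private lemma good01 : Good (Equiv.swap 0 1) := by
  rintro Φ ⟨hs, hd⟩
  have e0 : (Equiv.swap (0 : Fin 4) 1) 0 = 1 := by decide
  have e1 : (Equiv.swap (0 : Fin 4) 1) 1 = 0 := by decide
  have e2 : (Equiv.swap (0 : Fin 4) 1) 2 = 2 := by decide
  have e3 : (Equiv.swap (0 : Fin 4) 1) 3 = 3 := by decide
  have nea : Φ 1 3 ≠ Φ 0 1 := hd 1 3 0 1 (by decide) (by decide) (by decide)
  have nac : Φ 0 1 ≠ Φ 0 3 := hd 0 1 0 3 (by decide) (by decide) (by decide)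
  have ncb : Φ 0 3 ≠ Φ 0 2 := hd 0 3 0 2 (by decide) (by decide) (by decide)
  have nbf : Φ 0 2 ≠ Φ 2 3 := hd 0 2 2 3 (by decide) (by decide) (by decide)
  have nfd : Φ 2 3 ≠ Φ 1 2 := hd 2 3 1 2 (by decide) (by decide) (by decide)
  have nde : Φ 1 2 ≠ Φ 1 3 := hd 1 2 1 3 (by decide) (by decide) (by decide)
  have f0 : (1 : Equiv.Perm (Fin 4)) 0 = 0 := rfl
  have f1 : (1 : Equiv.Perm (Fin 4)) 1 = 1 := rfl
  have f2 : (1 : Equiv.Perm (Fin 4)) 2 = 2 := rfl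
  have f3 : (1 : Equiv.Perm (Fin 4)) 3 = 3 := rfl
  simp only [Cnd, e0, e1, e2, e3, f0, f1, f2, f3, rightMultiRatio, hs 1 0]
  constructor
  · intro h
    exact (rev_iff _ _ _ _ _ _).mp (rot2_imp nea nac h)
  · intro h
    have h1 := (rev_iff _ _ _ _ _ _).mpr h
    exact rot2_imp nfd nde (rot2_imp ncb nbf h1)

private lemma good02 : Good (Equiv.swap 0 2) := by
  rintro Φ ⟨hs, hd⟩
  have e0 : (Equiv.swap (0 : Fin 4) 2) 0 = 2 := by decide
  have e1 : (Equiv.swap (0 : Fin 4) 2) 1 = 1 := by decide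
  have e2 : (Equiv.swap (0 : Fin 4) 2) 2 = 0 := by decide
  have e3 : (Equiv.swap (0 : Fin 4) 2) 3 = 3 := by decide
  have nea : Φ 1 3 ≠ Φ 0 1 := hd 1 3 0 1 (by decide) (by decide) (by decide)
  have nac : Φ 0 1 ≠ Φ 0 3 := hd 0 1 0 3 (by decide) (by decide) (by decide)
  have ncb : Φ 0 3 ≠ Φ 0 2 := hd 0 3 0 2 (by decide) (by decide) (by decide)
  have nbf : Φ 0 2 ≠ Φ 2 3 := hd 0 2 2 3 (by decide) (by decide) (by decide)
  have nfd : Φ 2 3 ≠ Φ 1 2 := hd 2 3 1 2 (by decide) (by decide) (by decide)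
  have nde : Φ 1 2 ≠ Φ 1 3 := hd 1 2 1 3 (by decide) (by decide) (by decide)
  have f0 : (1 : Equiv.Perm (Fin 4)) 0 = 0 := rfl
  have f1 : (1 : Equiv.Perm (Fin 4)) 1 = 1 := rfl
  have f2 : (1 : Equiv.Perm (Fin 4)) 2 = 2 := rfl
  have f3 : (1 : Equiv.Perm (Fin 4)) 3 = 3 := rfl
  simp only [Cnd, e0, e1, e2, e3, f0, f1, f2, f3, rightMultiRatio, hs 2 1, hs 1 0, hs 2 0]
  constructor
  · intro h
    exact (rev_iff _ _ _ _ _ _).mp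
      (rot2_imp nea nac (rot2_imp nfd nde h))
  · intro h
    have h1 := (rev_iff _ _ _ _ _ _).mpr h
    exact rot2_imp ncb nbf h1

private lemma good12 : Good (Equiv.swap 1 2) := by
  rintro Φ ⟨hs, hd⟩
  have e0 : (Equiv.swap (1 : Fin 4) 2) 0 = 0 := by decide
  have e1 : (Equiv.swap (1 : Fin 4) 2) 1 = 2 := by decide
  have e2 : (Equiv.swap (1 : Fin 4) 2) 2 = 1 := by decide
  have e3 : (Equiv.swap (1 : Fin 4) 2) 3 = 3 := by decide
  have f0 : (1 : Equiv.Perm (Fin 4)) 0 = 0 := rfl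
  have f1 : (1 : Equiv.Perm (Fin 4)) 1 = 1 := rfl
  have f2 : (1 : Equiv.Perm (Fin 4)) 2 = 2 := rfl
  have f3 : (1 : Equiv.Perm (Fin 4)) 3 = 3 := rfl
  simp only [Cnd, e0, e1, e2, e3, f0, f1, f2, f3, rightMultiRatio, hs 2 1]
  exact rev_iff (Φ 0 3) (Φ 0 1) (Φ 1 3) (Φ 1 2) (Φ 2 3) (Φ 0 2)

private lemma good23 : Good (Equiv.swap 2 3) := by
  rintro Φ ⟨hs, hd⟩
  have e0 : (Equiv.swap (2 : Fin 4) 3) 0 = 0 := by decide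
  have e1 : (Equiv.swap (2 : Fin 4) 3) 1 = 1 := by decide
  have e2 : (Equiv.swap (2 : Fin 4) 3) 2 = 3 := by decide
  have e3 : (Equiv.swap (2 : Fin 4) 3) 3 = 2 := by decide
  have hca : Φ 0 3 ≠ Φ 0 1 := hd 0 3 0 1 (by decide) (by decide) (by decide)
  have hae : Φ 0 1 ≠ Φ 1 3 := hd 0 1 1 3 (by decide) (by decide) (by decide)
  have hed : Φ 1 3 ≠ Φ 1 2 := hd 1 3 1 2 (by decide) (by decide) (by decide)
  have hdf : Φ 1 2 ≠ Φ 2 3 := hd 1 2 2 3 (by decide) (by decide) (by decide)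
  have hbc : Φ 0 2 ≠ Φ 0 3 := hd 0 2 0 3 (by decide) (by decide) (by decide)
  have hdb : Φ 1 2 ≠ Φ 0 2 := hd 1 2 0 2 (by decide) (by decide) (by decide)
  have hba : Φ 0 2 ≠ Φ 0 1 := hd 0 2 0 1 (by decide) (by decide) (by decide)
  have had : Φ 0 1 ≠ Φ 1 2 := hd 0 1 1 2 (by decide) (by decide) (by decide)
  have hef : Φ 1 3 ≠ Φ 2 3 := hd 1 3 2 3 (by decide) (by decide) (by decide)
  have hec : Φ 1 3 ≠ Φ 0 3 := hd 1 3 0 3 (by decide) (by decide) (by decide)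
  have f0 : (1 : Equiv.Perm (Fin 4)) 0 = 0 := rfl
  have f1 : (1 : Equiv.Perm (Fin 4)) 1 = 1 := rfl
  have f2 : (1 : Equiv.Perm (Fin 4)) 2 = 2 := rfl
  have f3 : (1 : Equiv.Perm (Fin 4)) 3 = 3 := rfl
  simp only [Cnd, e0, e1, e2, e3, f0, f1, f2, f3, rightMultiRatio, hs 3 2]
  exact hard_iff hca hae hed hdf hbc hdb hba had hef hec

private lemma good13 : Good (Equiv.swap 1 3) := by
  have h : (Equiv.swap (1 : Fin 4) 3) = Equiv.swap 1 2 * Equiv.swap 2 3 * Equiv.swap 1 2 := by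
    decide
  rw [h]
  exact (good12.mul good23).mul good12

private lemma good03 : Good (Equiv.swap 0 3) := by
  have h : (Equiv.swap (0 : Fin 4) 3) = Equiv.swap 0 1 * Equiv.swap 1 3 * Equiv.swap 0 1 := by
    decide
  rw [h]
  exact (good01.mul good13).mul good01

private lemma good_swap (x y : Fin 4) (hxy : x ≠ y) : Good (Equiv.swap x y) := by
  fin_cases x <;> fin_cases y <;>
    first
      | exact absurd rfl hxy
      | exact good01
      | exact good02
      | exact good03
      | exact good12
      | exact good13
      | exact good23
      | (rw [Equiv.swap_comm]
         first
           | exact good01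
           | exact good02
           | exact good03
           | exact good12
           | exact good13
           | exact good23)

end MultiRatioPerm

theorem multiRatio_cond_perm_invariant
    (Φ : Fin 4 → Fin 4 → Quaternion ℝ)
    (hsymm : ∀ i k, Φ i k = Φ k i)
    (hdist : ∀ i k l m : Fin 4, i ≠ k → l ≠ m →
      ({i, k} : Finset (Fin 4)) ≠ ({l, m} : Finset (Fin 4)) → Φ i k ≠ Φ l m)
    (π : Equiv.Perm (Fin 4)) :
    rightMultiRatio (Φ (π 0) (π 3)) (Φ (π 0) (π 1)) (Φ (π 1) (π 3))
        (Φ (π 1) (π 2)) (Φ (π 2) (π 3)) (Φ (π 0) (π 2)) = -1 ↔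
      rightMultiRatio (Φ 0 3) (Φ 0 1) (Φ 1 3) (Φ 1 2) (Φ 2 3) (Φ 0 2) = -1 := by
  have G : MultiRatioPerm.Good π :=
    Equiv.Perm.swap_induction_on π MultiRatioPerm.Good.one
      (fun f x y hxy hf => (MultiRatioPerm.good_swap x y hxy).mul hf)
  have hG := G Φ ⟨hsymm, hdist⟩
  exact hG
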